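/- If G is an r-regular graph of order n with r odd, then γ⁰_st(G) ≤ -n/r. -/

import Mathlib

open SimpleGraph Finset

/-- If `G` is `r`-regular of order `n` with `r` odd, then `γ⁰_st(G) ≤ -n/r`. -/
theorem istdn_odd_regular_upper_bound {V : Type*} [Fintype V] [DecidableEq V]
    (G : SimpleGraph V) [DecidableRel G.Adj] (r : ℕ) (hr : Odd r)
    (hreg : G.IsRegularOfDegree r)
    (g : ℤ)
    (hg : IsGreatest {w : ℤ | ∃ f : V → ℤ,
        (∀ v, f v = 1 ∨ f v = -1) ∧
        (∀ v : V, ∑ u ∈ G.neighborFinset v, f u ≤ 0) ∧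
        w = ∑ v, f v} g) :
    (g : ℚ) ≤ -(Fintype.card V : ℚ) / (r : ℚ) := by
  obtain ⟨⟨f, hf1, hf2, heq⟩, -⟩ := hg
  have hr0 : 0 < r := hr.pos
  have key : ∀ v, ∑ u ∈ G.neighborFinset v, f u ≤ -1 := by
    intro v
    have hodd : Odd (∑ u ∈ G.neighborFinset v, f u) := by
      have h1 : ∑ u ∈ G.neighborFinset v, f u
          = ∑ u ∈ G.neighborFinset v, (f u - 1) + (r : ℤ) := by
        rw [Finset.sum_sub_distrib]
        simp [G.card_neighborFinset_eq_degree, hreg v]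
      rw [h1]
      have heven : Even (∑ u ∈ G.neighborFinset v, (f u - 1)) := by
        apply Finset.even_sum
        intro u _
        rcases hf1 u with h | h <;> simp [h]
      exact heven.add_odd (by exact_mod_cast hr)
    have h0 := hf2 v
    obtain ⟨k, hk⟩ := hodd
    omega
  have swap : ∑ v, ∑ u ∈ G.neighborFinset v, f u = (r : ℤ) * ∑ v, f v := by
    calc ∑ v, ∑ u ∈ G.neighborFinset v, f u
        = ∑ v, ∑ u, if G.Adj v u then f u else 0 := by
          simp [SimpleGraph.neighborFinset_eq_filter, Finset.sum_filter]
      _ = ∑ u, ∑ v, if G.Adj v u then f u else 0 := Finset.sum_comm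
      _ = ∑ u, ∑ v, if G.Adj u v then f u else 0 := by
          refine Finset.sum_congr rfl fun u _ => Finset.sum_congr rfl fun v _ => ?_
          exact if_congr (G.adj_comm v u) rfl rfl
      _ = ∑ u, (G.degree u : ℤ) * f u := by
          refine Finset.sum_congr rfl fun u _ => ?_
          rw [← Finset.sum_filter, Finset.sum_const]
          simp [SimpleGraph.degree, SimpleGraph.neighborFinset_eq_filter, mul_comm]
      _ = (r : ℤ) * ∑ v, f v := by
          rw [Finset.mul_sum]
          exact Finset.sum_congr rfl fun u _ => by rw [hreg u]
  have hmain : (r : ℤ) * g ≤ -(Fintype.card V : ℤ) := by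
    rw [heq, ← swap]
    calc ∑ v, ∑ u ∈ G.neighborFinset v, f u ≤ ∑ _v : V, (-1 : ℤ) :=
          Finset.sum_le_sum fun v _ => key v
      _ = -(Fintype.card V : ℤ) := by simp [Finset.sum_const]
  have hrq : (0 : ℚ) < (r : ℚ) := by exact_mod_cast hr0
  rw [le_div_iff₀ hrq]
  have : ((r : ℤ) * g : ℚ) ≤ ((-(Fintype.card V : ℤ) : ℤ) : ℚ) := by exact_mod_cast hmain
  push_cast at this
  linarith
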